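/- For every m, n ∈ ℕ ∪ {0} and every w ∈ Σ_2, the dyadic odometer O and the shift σ_2 on Σ_2 satisfy the renormalization identity (O^m ∘ σ_2^n)(w) = (σ_2^n ∘ O^{m·2^n})(w). -/
import Mathlib


open scoped Classical

/-- The dyadic odometer on `Σ₂ = {0,1}^ℕ` (with `true = 1`, `false = 0`). -/
noncomputable def dyadicOdometer (w : ℕ → Bool) : ℕ → Bool :=
  if h : ∃ k, w k = false then
    fun i => if i < Nat.find h then false else if i = Nat.find h then true else w i
  else fun _ => false

/-- The shift map `σ₂` on `Σ₂`. -/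
def shiftTwo (w : ℕ → Bool) : ℕ → Bool := fun i => w (i + 1)

lemma od_apply (w : ℕ → Bool) (h : ∃ k, w k = false) (i : ℕ) :
    dyadicOdometer w i =
      if i < Nat.find h then false else if i = Nat.find h then true else w i := by
  rw [dyadicOdometer, dif_pos h]

lemma od_apply_not (w : ℕ → Bool) (h : ¬ ∃ k, w k = false) (i : ℕ) :
    dyadicOdometer w i = false := by
  rw [dyadicOdometer, dif_neg h]

lemma key (w : ℕ → Bool) :
    shiftTwo (dyadicOdometer (dyadicOdometer w)) = dyadicOdometer (shiftTwo w) := by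
  funext i
  by_cases hA : ∃ k, shiftTwo w k = false
  · set k1 := Nat.find hA with hk1
    have hk1spec : w (k1 + 1) = false := Nat.find_spec hA
    have hk1min : ∀ j, j < k1 → w (j + 1) = true := by
      intro j hj
      have := Nat.find_min hA hj
      simpa [shiftTwo] using this
    by_cases hw0 : w 0 = false
    · -- first digit is 0
      have h0 : ∃ k, w k = false := ⟨0, hw0⟩
      have hfind0 : Nat.find h0 = 0 := by
        simp [Nat.find_eq_zero, hw0]
      have hOw : ∀ i, dyadicOdometer w i = if i = 0 then true else w i := by
        intro i
        rw [od_apply w h0, hfind0]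
        simp
      have h1 : ∃ k, dyadicOdometer w k = false := by
        refine ⟨k1 + 1, ?_⟩
        rw [hOw]; simp [hk1spec]
      have hfind1 : Nat.find h1 = k1 + 1 := by
        rw [Nat.find_eq_iff]
        constructor
        · rw [hOw]; simp [hk1spec]
        · intro j hj
          rw [hOw]
          rcases Nat.eq_zero_or_pos j with hj0 | hj0
          · simp [hj0]
          · have : j - 1 < k1 := by omega
            have := hk1min (j - 1) this
            have hj1 : j - 1 + 1 = j := by omega
            rw [hj1] at this
            simp [Nat.pos_iff_ne_zero.mp hj0, this]
      have lhs : dyadicOdometer (dyadicOdometer w) (i + 1) =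
          if i < k1 then false else if i = k1 then true else w (i + 1) := by
        rw [od_apply _ h1, hfind1]
        rcases lt_trichotomy i k1 with h | h | h
        · simp [h, Nat.add_lt_add_right h 1]
        · simp [h]
        · have h1' : ¬ i + 1 < k1 + 1 := by omega
          have h2' : i + 1 ≠ k1 + 1 := by omega
          rw [if_neg h1', if_neg h2', hOw]
          simp [show ¬ i < k1 by omega, show i ≠ k1 by omega]
      have rhs : dyadicOdometer (shiftTwo w) i =
          if i < k1 then false else if i = k1 then true else w (i + 1) := by
        rw [od_apply _ hA, ← hk1]
        rfl
      rw [shiftTwo] at *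
      rw [lhs, rhs]
    · -- first digit is 1
      have hw0' : w 0 = true := by
        cases h : w 0 <;> simp_all
      have hw : ∃ k, w k = false := ⟨k1 + 1, hk1spec⟩
      set k0 := Nat.find hw with hk0
      have hk0pos : 0 < k0 := by
        rcases Nat.eq_zero_or_pos k0 with h | h
        · exfalso; have := Nat.find_spec hw; rw [← hk0, h] at this; simp_all
        · exact h
      have hk0spec : w k0 = false := Nat.find_spec hw
      have hk0min : ∀ j, j < k0 → w j = true := by
        intro j hj
        have := Nat.find_min hw hj
        cases h : w j <;> simp_all
      have hfindA : k1 = k0 - 1 := by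
        rw [hk1, Nat.find_eq_iff]
        constructor
        · show w (k0 - 1 + 1) = false
          rw [show k0 - 1 + 1 = k0 by omega]; exact hk0spec
        · intro j hj
          show ¬ w (j + 1) = false
          have := hk0min (j + 1) (by omega)
          simp [this]
      have hOw : ∀ i, dyadicOdometer w i =
          if i < k0 then false else if i = k0 then true else w i := by
        intro i; rw [od_apply _ hw, ← hk0]
      have h1 : ∃ k, dyadicOdometer w k = false := by
        refine ⟨0, ?_⟩
        rw [hOw]; simp [hk0pos]
      have hfind1 : Nat.find h1 = 0 := by
        simp [Nat.find_eq_zero]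
        rw [hOw]; simp [hk0pos]
      have lhs : dyadicOdometer (dyadicOdometer w) (i + 1) = dyadicOdometer w (i + 1) := by
        rw [od_apply _ h1, hfind1]
        simp
      have rhs : dyadicOdometer (shiftTwo w) i =
          if i < k1 then false else if i = k1 then true else w (i + 1) := by
        rw [od_apply _ hA, ← hk1]
        rfl
      rw [shiftTwo] at *
      rw [lhs, rhs, hOw, hfindA]
      rcases lt_trichotomy (i + 1) k0 with h | h | h
      · rw [if_pos h, if_pos (show i < k0 - 1 by omega)]
      · rw [if_neg (by omega), if_pos h, if_neg (show ¬ i < k0 - 1 by omega),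
          if_pos (show i = k0 - 1 by omega)]
      · rw [if_neg (by omega), if_neg (by omega), if_neg (show ¬ i < k0 - 1 by omega),
          if_neg (show i ≠ k0 - 1 by omega)]
  · -- tail all ones
    have htail : ∀ k, w (k + 1) = true := by
      intro k
      have : ¬ shiftTwo w k = false := fun h => hA ⟨k, h⟩
      rw [shiftTwo] at this
      cases h : w (k + 1) <;> simp_all
    by_cases hw0 : w 0 = false
    · have h0 : ∃ k, w k = false := ⟨0, hw0⟩
      have hfind0 : Nat.find h0 = 0 := by simp [Nat.find_eq_zero, hw0]
      have hOw : ∀ i, dyadicOdometer w i = true := by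
        intro i
        rw [od_apply w h0, hfind0]
        rcases Nat.eq_zero_or_pos i with h | h
        · simp [h]
        · rw [if_neg (show ¬ i < 0 by omega), if_neg (show i ≠ 0 by omega)]
          have := htail (i - 1)
          rwa [show i - 1 + 1 = i by omega] at this
      have h1 : ¬ ∃ k, dyadicOdometer w k = false := by
        rintro ⟨k, hk⟩; rw [hOw] at hk; simp_all
      rw [shiftTwo, od_apply_not _ h1, od_apply_not _ hA]
    · have hw : ¬ ∃ k, w k = false := by
        rintro ⟨k, hk⟩
        rcases Nat.eq_zero_or_pos k with h | h
        · rw [h] at hk; exact hw0 hk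
        · have := htail (k - 1); rw [show k - 1 + 1 = k by omega] at this; simp_all
      have hOw : ∀ i, dyadicOdometer w i = false := od_apply_not w hw
      have h1 : ∃ k, dyadicOdometer w k = false := ⟨0, hOw 0⟩
      have hfind1 : Nat.find h1 = 0 := by simp [Nat.find_eq_zero, hOw]
      have lhs : dyadicOdometer (dyadicOdometer w) (i + 1) = false := by
        rw [od_apply _ h1, hfind1]
        simp [hOw]
      rw [shiftTwo, lhs, od_apply_not _ hA]

lemma key_n (n : ℕ) (w : ℕ → Bool) :
    shiftTwo^[n] (dyadicOdometer^[2 ^ n] w) = dyadicOdometer (shiftTwo^[n] w) := by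
  induction n generalizing w with
  | zero => simp
  | succ n ih =>
    have h2 : 2 ^ (n + 1) = 2 ^ n * 2 := by ring
    rw [h2, Function.iterate_mul, Function.iterate_succ', Function.iterate_succ']
    simp only [Function.comp_apply]
    rw [show dyadicOdometer^[2 ^ n]
        ((dyadicOdometer^[2 ^ n])^[1] w) = dyadicOdometer^[2 ^ n] (dyadicOdometer^[2 ^ n] w) by
      simp]
    rw [ih, ih, key]

/-- Renormalization identity between the dyadic odometer and the shift:
`O^m ∘ σ₂^n = σ₂^n ∘ O^{m·2^n}`. -/
theorem dyadic_odometer_shift_renormalization (m n : ℕ) (w : ℕ → Bool) :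
    (dyadicOdometer)^[m] ((shiftTwo)^[n] w) =
      (shiftTwo)^[n] ((dyadicOdometer)^[m * 2 ^ n] w) := by
  induction m generalizing w with
  | zero => simp
  | succ m ih =>
    rw [Function.iterate_succ_apply, ← key_n, ih, ← Function.iterate_add_apply,
      show m * 2 ^ n + 2 ^ n = (m + 1) * 2 ^ n by ring]
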